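/- A ΔY transformation performed on a triangle of a 3-regular 3-vertex-connected simple graph with more than 4 vertices yields a 3-regular 3-vertex-connected simple graph. -/

import Mathlib

/-- `G` is `k`-vertex-connected: `|V| > k` and removing fewer than `k` vertices
never disconnects it. -/
def KVertexConnected {V : Type*} [Fintype V] (G : SimpleGraph V) (k : ℕ) : Prop :=
  k < Fintype.card V ∧
    ∀ s : Finset V, s.card < k → (G.induce ((↑s : Set V)ᶜ)).Connected

/-- The ΔY transformation: the triangle `a, b, c` (with outside neighbors
`a', b', c'`) is replaced by a single new vertex adjacent to `a', b', c'`.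
We model the resulting graph on the vertex set `V ∖ {b, c}`, the vertex `a`
playing the role of the new vertex `w`. -/
def deltaY {V : Type*} (G : SimpleGraph V) (a b c a' b' c' : V) :
    SimpleGraph {x : V // x ≠ b ∧ x ≠ c} where
  Adj x y := x ≠ y ∧
    ((x.1 ≠ a ∧ y.1 ≠ a ∧ G.Adj x.1 y.1) ∨
     (x.1 = a ∧ (y.1 = a' ∨ y.1 = b' ∨ y.1 = c')) ∨
     (y.1 = a ∧ (x.1 = a' ∨ x.1 = b' ∨ x.1 = c')))
  symm := by
    constructor
    rintro x y ⟨hne, h⟩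
    refine ⟨fun h' => hne h'.symm, ?_⟩
    rcases h with ⟨h1, h2, h3⟩ | h | h
    · exact Or.inl ⟨h2, h1, h3.symm⟩
    · exact Or.inr (Or.inr h)
    · exact Or.inr (Or.inl h)
  loopless := by constructor; rintro x ⟨hne, -⟩; exact hne rfl

section AuxLemmas

/-- The "raw" adjacency relation underlying `deltaY`. -/
def RawAdj {V : Type*} (G : SimpleGraph V) (a a' b' c' u v : V) : Prop :=
  (u ≠ a ∧ v ≠ a ∧ G.Adj u v) ∨ (u = a ∧ (v = a' ∨ v = b' ∨ v = c')) ∨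
    (v = a ∧ (u = a' ∨ u = b' ∨ u = c'))

lemma deltaY_adj' {V : Type*} {G : SimpleGraph V} {a b c a' b' c' : V}
    (x y : {x : V // x ≠ b ∧ x ≠ c}) :
    (deltaY G a b c a' b' c').Adj x y ↔ x ≠ y ∧ RawAdj G a a' b' c' x.1 y.1 :=
  Iff.rfl

lemma aux_conn_of_cross {W : Type*} (H : SimpleGraph W) [Nonempty W]
    (h : ∀ A : Set W, A.Nonempty → Aᶜ.Nonempty → ∃ x ∈ A, ∃ y ∈ Aᶜ, H.Adj x y) :
    H.Connected := by
  rw [SimpleGraph.connected_iff]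
  refine ⟨fun v w => ?_, inferInstance⟩
  by_contra hvw
  set A : Set W := {x | H.Reachable v x} with hA
  obtain ⟨x, hx, y, hy, hadj⟩ := h A ⟨v, SimpleGraph.Reachable.refl v⟩ ⟨w, hvw⟩
  exact hy (hx.trans hadj.reachable)

lemma aux_cross_of_conn {W : Type*} {H : SimpleGraph W} (hc : H.Connected) (A : Set W)
    (hA : A.Nonempty) (hA' : Aᶜ.Nonempty) : ∃ x ∈ A, ∃ y ∈ Aᶜ, H.Adj x y := by
  obtain ⟨x, hx⟩ := hA
  obtain ⟨y, hy⟩ := hA'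
  obtain ⟨p⟩ := hc.preconnected x y
  obtain ⟨d, -, hd1, hd2⟩ := p.exists_boundary_dart A hx hy
  exact ⟨d.fst, hd1, d.snd, hd2, d.adj⟩

/-- `V`-level crossing-edge consequence of 3-connectivity. -/
lemma aux_cross3 {V : Type*} [Fintype V] {G : SimpleGraph V}
    (h3vc : KVertexConnected G 3)
    (T : Finset V) (hT : T.card < 3) (A₁ : Set V)
    (hA : ∃ u, u ∉ T ∧ u ∈ A₁) (hB : ∃ v, v ∉ T ∧ v ∉ A₁) :
    ∃ u v, u ∉ T ∧ v ∉ T ∧ u ∈ A₁ ∧ v ∉ A₁ ∧ G.Adj u v := by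
  have hconn := h3vc.2 T hT
  obtain ⟨u, hu, huA⟩ := hA
  obtain ⟨v, hv, hvA⟩ := hB
  set A : Set ((↑T : Set V)ᶜ : Set V) := {x | ↑x ∈ A₁} with hAdef
  obtain ⟨x, hx, y, hy, hadj⟩ := aux_cross_of_conn hconn A ⟨⟨u, hu⟩, huA⟩ ⟨⟨v, hv⟩, hvA⟩
  exact ⟨x.1, y.1, x.2, y.2, hx, hy, hadj⟩

lemma aux_ncard_triple {V : Type*} [Fintype V] (x y z : V)
    (hxy : x ≠ y) (hxz : x ≠ z) (hyz : y ≠ z) :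
    ({x, y, z} : Set V).ncard = 3 := by
  rw [Set.ncard_insert_of_notMem (by simp [hxy, hxz]), Set.ncard_pair hyz]

lemma aux_nbhd {V : Type*} [Fintype V] {G : SimpleGraph V} {v x y z : V}
    (hreg : (G.neighborSet v).ncard = 3)
    (hx : G.Adj v x) (hy : G.Adj v y) (hz : G.Adj v z)
    (hxy : x ≠ y) (hxz : x ≠ z) (hyz : y ≠ z) :
    ∀ w, G.Adj v w ↔ (w = x ∨ w = y ∨ w = z) := by
  have hsub : ({x, y, z} : Set V) ⊆ G.neighborSet v := by
    rintro w (rfl | rfl | rfl) <;> assumption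
  have hcard : ({x, y, z} : Set V).ncard = 3 := aux_ncard_triple x y z hxy hxz hyz
  have heq := Set.eq_of_subset_of_ncard_le hsub (by rw [hreg, hcard]) (Set.toFinite _)
  intro w
  rw [← SimpleGraph.mem_neighborSet, ← heq]
  simp

end AuxLemmas

/-- A ΔY transformation performed on a triangle of a 3-regular 3-vertex-connected
simple graph with more than 4 vertices yields a (simple) 3-regular
3-vertex-connected graph. -/
theorem deltaY_preserves_three_connected {V : Type*} [Fintype V] [DecidableEq V]
    (G : SimpleGraph V)
    (hreg : ∀ v : V, (G.neighborSet v).ncard = 3)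
    (h3vc : KVertexConnected G 3)
    (hcard : 4 < Fintype.card V)
    (a b c a' b' c' : V)
    (hab : G.Adj a b) (hbc : G.Adj b c) (hac : G.Adj a c)
    (haa' : G.Adj a a') (hbb' : G.Adj b b') (hcc' : G.Adj c c')
    (ha' : a' ≠ a ∧ a' ≠ b ∧ a' ≠ c)
    (hb' : b' ≠ a ∧ b' ≠ b ∧ b' ≠ c)
    (hc' : c' ≠ a ∧ c' ≠ b ∧ c' ≠ c)
    (hdist : a' ≠ b' ∧ a' ≠ c' ∧ b' ≠ c') :
    (∀ x, ((deltaY G a b c a' b' c').neighborSet x).ncard = 3) ∧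
      KVertexConnected (deltaY G a b c a' b' c') 3 := by
  obtain ⟨ha'a, ha'b, ha'c⟩ := ha'
  obtain ⟨hb'a, hb'b, hb'c⟩ := hb'
  obtain ⟨hc'a, hc'b, hc'c⟩ := hc'
  obtain ⟨hpab, hpac, hpbc⟩ := hdist
  -- neighborhoods of the triangle vertices
  have hNa : ∀ v, G.Adj a v ↔ (v = b ∨ v = c ∨ v = a') :=
    aux_nbhd (hreg a) hab hac haa' hbc.ne ha'b.symm ha'c.symm
  have hNb : ∀ v, G.Adj b v ↔ (v = a ∨ v = c ∨ v = b') :=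
    aux_nbhd (hreg b) hab.symm hbc hbb' hac.ne hb'a.symm hb'c.symm
  have hNc : ∀ v, G.Adj c v ↔ (v = a ∨ v = b ∨ v = c') :=
    aux_nbhd (hreg c) hac.symm hbc.symm hcc' hab.ne hc'a.symm hc'b.symm
  -- the outside neighbors are adjacent to exactly one triangle vertex
  have hMeq : ∀ p, (p = a' ∨ p = b' ∨ p = c') →
      ∃ t, (t = a ∨ t = b ∨ t = c) ∧
        G.neighborSet p \ {a, b, c} = G.neighborSet p \ {t} ∧ G.Adj p t := by
    rintro p (rfl | rfl | rfl)
    · refine ⟨a, Or.inl rfl, ?_, haa'.symm⟩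
      ext w
      simp only [Set.mem_diff, SimpleGraph.mem_neighborSet, Set.mem_insert_iff,
        Set.mem_singleton_iff, not_or]
      refine ⟨fun ⟨h1, h2, _, _⟩ => ⟨h1, h2⟩, fun ⟨h1, h2⟩ => ⟨h1, h2, ?_, ?_⟩⟩
      · rintro rfl
        rcases (hNb p).mp h1.symm with h | h | h
        exacts [ha'a h, ha'c h, hpab h]
      · rintro rfl
        rcases (hNc p).mp h1.symm with h | h | h
        exacts [ha'a h, ha'b h, hpac h]
    · refine ⟨b, Or.inr (Or.inl rfl), ?_, hbb'.symm⟩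
      ext w
      simp only [Set.mem_diff, SimpleGraph.mem_neighborSet, Set.mem_insert_iff,
        Set.mem_singleton_iff, not_or]
      refine ⟨fun ⟨h1, _, h2, _⟩ => ⟨h1, h2⟩, fun ⟨h1, h2⟩ => ⟨h1, ?_, h2, ?_⟩⟩
      · rintro rfl
        rcases (hNa p).mp h1.symm with h | h | h
        exacts [hb'b h, hb'c h, hpab h.symm]
      · rintro rfl
        rcases (hNc p).mp h1.symm with h | h | h
        exacts [hb'a h, hb'b h, hpbc h]
    · refine ⟨c, Or.inr (Or.inr rfl), ?_, hcc'.symm⟩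
      ext w
      simp only [Set.mem_diff, SimpleGraph.mem_neighborSet, Set.mem_insert_iff,
        Set.mem_singleton_iff, not_or]
      refine ⟨fun ⟨h1, _, _, h2⟩ => ⟨h1, h2⟩, fun ⟨h1, h2⟩ => ⟨h1, ?_, ?_, h2⟩⟩
      · rintro rfl
        rcases (hNa p).mp h1.symm with h | h | h
        exacts [hc'b h, hc'c h, hpac h.symm]
      · rintro rfl
        rcases (hNb p).mp h1.symm with h | h | h
        exacts [hc'a h, hc'c h, hpbc h.symm]
  have hMcard : ∀ p, (p = a' ∨ p = b' ∨ p = c') →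
      (G.neighborSet p \ {a, b, c}).ncard = 2 := by
    intro p hp
    obtain ⟨t, -, heq, hadj⟩ := hMeq p hp
    rw [heq, Set.ncard_diff_singleton_of_mem (show t ∈ G.neighborSet p from hadj), hreg p]
  have hmemM : ∀ p w, w ∈ G.neighborSet p \ ({a, b, c} : Set V) →
      G.Adj p w ∧ w ≠ a ∧ w ≠ b ∧ w ≠ c := by
    intro p w hw
    simp only [Set.mem_diff, SimpleGraph.mem_neighborSet, Set.mem_insert_iff,
      Set.mem_singleton_iff, not_or] at hw
    exact ⟨hw.1, hw.2.1, hw.2.2.1, hw.2.2.2⟩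
  have hprime2 : ∀ p, (p = a' ∨ p = b' ∨ p = c') →
      ∃ d e, d ≠ e ∧ d ∈ G.neighborSet p \ ({a, b, c} : Set V) ∧
        e ∈ G.neighborSet p \ ({a, b, c} : Set V) := by
    intro p hp
    have h2 := hMcard p hp
    have h1 : 1 < (G.neighborSet p \ ({a, b, c} : Set V)).ncard := by omega
    obtain ⟨d, hd, e, he, hde⟩ := (Set.one_lt_ncard (Set.toFinite _)).mp h1
    exact ⟨d, e, hde, hd, he⟩
  -- degree computation
  have hdeg : ∀ x, ((deltaY G a b c a' b' c').neighborSet x).ncard = 3 := by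
    intro x
    rw [← Set.ncard_image_of_injective _ (Subtype.val_injective
      (p := fun x : V => x ≠ b ∧ x ≠ c))]
    obtain ⟨xv, hxb, hxc⟩ := x
    by_cases hxa : xv = a
    · subst hxa
      have him : Subtype.val '' ((deltaY G xv b c a' b' c').neighborSet ⟨xv, hxb, hxc⟩) =
          {a', b', c'} := by
        ext v
        simp only [Set.mem_image, SimpleGraph.mem_neighborSet, Set.mem_insert_iff,
          Set.mem_singleton_iff]
        constructor
        · rintro ⟨y, ⟨hne, hraw⟩, rfl⟩
          rcases hraw with ⟨h1, -, -⟩ | ⟨-, h2⟩ | ⟨h3, h4⟩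
          · exact absurd rfl h1
          · exact h2
          · rcases h4 with h | h | h
            exacts [absurd h.symm ha'a, absurd h.symm hb'a, absurd h.symm hc'a]
        · rintro (rfl | rfl | rfl)
          · exact ⟨⟨v, ha'b, ha'c⟩, ⟨fun h => ha'a (congrArg Subtype.val h).symm,
              Or.inr (Or.inl ⟨rfl, Or.inl rfl⟩)⟩, rfl⟩
          · exact ⟨⟨v, hb'b, hb'c⟩, ⟨fun h => hb'a (congrArg Subtype.val h).symm,
              Or.inr (Or.inl ⟨rfl, Or.inr (Or.inl rfl)⟩)⟩, rfl⟩
          · exact ⟨⟨v, hc'b, hc'c⟩, ⟨fun h => hc'a (congrArg Subtype.val h).symm,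
              Or.inr (Or.inl ⟨rfl, Or.inr (Or.inr rfl)⟩)⟩, rfl⟩
      rw [him]
      exact aux_ncard_triple a' b' c' hpab hpac hpbc
    · by_cases hxp : xv = a' ∨ xv = b' ∨ xv = c'
      · have him : Subtype.val '' ((deltaY G a b c a' b' c').neighborSet ⟨xv, hxb, hxc⟩) =
            insert a (G.neighborSet xv \ ({a, b, c} : Set V)) := by
          ext v
          simp only [Set.mem_image, SimpleGraph.mem_neighborSet, Set.mem_insert_iff,
            Set.mem_diff, Set.mem_singleton_iff]
          constructor
          · rintro ⟨y, ⟨hne, hraw⟩, rfl⟩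
            rcases hraw with ⟨h1, h2, h3⟩ | ⟨h1, -⟩ | ⟨h3, -⟩
            · right
              refine ⟨h3, ?_⟩
              simp only [Set.mem_insert_iff, Set.mem_singleton_iff, not_or]
              exact ⟨h2, y.2.1, y.2.2⟩
            · exact absurd h1 hxa
            · exact Or.inl h3
          · rintro (rfl | ⟨hadj, hv⟩)
            · exact ⟨⟨v, hab.ne, hac.ne⟩, ⟨fun h => hxa (congrArg Subtype.val h),
                Or.inr (Or.inr ⟨rfl, hxp⟩)⟩, rfl⟩
            · simp only [Set.mem_insert_iff, Set.mem_singleton_iff, not_or] at hv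
              exact ⟨⟨v, hv.2.1, hv.2.2⟩, ⟨fun h => hadj.ne (congrArg Subtype.val h),
                Or.inl ⟨hxa, hv.1, hadj⟩⟩, rfl⟩
        rw [him, Set.ncard_insert_of_notMem (by simp), hMcard xv hxp]
      · push_neg at hxp
        have him : Subtype.val '' ((deltaY G a b c a' b' c').neighborSet ⟨xv, hxb, hxc⟩) =
            G.neighborSet xv := by
          ext v
          simp only [Set.mem_image, SimpleGraph.mem_neighborSet]
          constructor
          · rintro ⟨y, ⟨hne, hraw⟩, rfl⟩
            rcases hraw with ⟨-, -, h3⟩ | ⟨h1, -⟩ | ⟨-, h⟩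
            · exact h3
            · exact absurd h1 hxa
            · rcases h with h | h | h
              exacts [absurd h hxp.1, absurd h hxp.2.1, absurd h hxp.2.2]
          · intro hadj
            have hva : v ≠ a := by
              rintro rfl
              rcases (hNa xv).mp hadj.symm with h | h | h
              exacts [hxb h, hxc h, hxp.1 h]
            have hvb : v ≠ b := by
              rintro rfl
              rcases (hNb xv).mp hadj.symm with h | h | h
              exacts [hxa h, hxc h, hxp.2.1 h]
            have hvc : v ≠ c := by
              rintro rfl
              rcases (hNc xv).mp hadj.symm with h | h | h
              exacts [hxa h, hxb h, hxp.2.2 h]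
            exact ⟨⟨v, hvb, hvc⟩, ⟨fun h => hadj.ne (congrArg Subtype.val h),
              Or.inl ⟨hxa, hva, hadj⟩⟩, rfl⟩
        rw [him]
        exact hreg xv
  have h4 : ({⟨a, hab.ne, hac.ne⟩, ⟨a', ha'b, ha'c⟩, ⟨b', hb'b, hb'c⟩, ⟨c', hc'b, hc'c⟩} :
      Finset {x : V // x ≠ b ∧ x ≠ c}).card = 4 := by
    rw [Finset.card_insert_of_notMem (by
          simp only [Finset.mem_insert, Finset.mem_singleton, Subtype.mk.injEq]
          push_neg
          exact ⟨fun h => ha'a h.symm, fun h => hb'a h.symm, fun h => hc'a h.symm⟩),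
        Finset.card_insert_of_notMem (by
          simp only [Finset.mem_insert, Finset.mem_singleton, Subtype.mk.injEq]
          push_neg
          exact ⟨hpab, hpac⟩),
        Finset.card_insert_of_notMem (by
          simp only [Finset.mem_singleton, Subtype.mk.injEq]
          exact hpbc),
        Finset.card_singleton]
  refine ⟨hdeg, ?_, ?_⟩
  · calc (3 : ℕ) < 4 := by norm_num
      _ = _ := h4.symm
      _ ≤ Fintype.card {x : V // x ≠ b ∧ x ≠ c} := Finset.card_le_univ _
  intro s hs
  -- a vertex avoiding `s`
  have hx0 : ∃ x : {x : V // x ≠ b ∧ x ≠ c}, x ∉ s := by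
    by_contra h
    push_neg at h
    have hsub : ({⟨a, hab.ne, hac.ne⟩, ⟨a', ha'b, ha'c⟩, ⟨b', hb'b, hb'c⟩, ⟨c', hc'b, hc'c⟩} :
        Finset {x : V // x ≠ b ∧ x ≠ c}) ⊆ s := fun x _ => h x
    have := Finset.card_le_card hsub
    omega
  obtain ⟨x0, hx0⟩ := hx0
  haveI : Nonempty ((↑s : Set {x : V // x ≠ b ∧ x ≠ c})ᶜ : Set _) := ⟨⟨x0, by simpa using hx0⟩⟩
  apply aux_conn_of_cross
  intro A hAne hAcne
  by_contra hcon
  push_neg at hcon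
  -- the removed vertices, at the level of `V`
  set Sf : Finset V := s.image (fun x => x.1) with hSfdef
  have hSfcard : Sf.card < 3 := lt_of_le_of_lt Finset.card_image_le hs
  have hSfmem : ∀ v : V, v ∈ Sf ↔ ∃ hv : v ≠ b ∧ v ≠ c, (⟨v, hv⟩ : {x : V // x ≠ b ∧ x ≠ c}) ∈ s := by
    intro v
    simp only [hSfdef, Finset.mem_image]
    constructor
    · rintro ⟨x, hx, rfl⟩
      exact ⟨x.2, by simpa using hx⟩
    · rintro ⟨hv, h⟩
      exact ⟨_, h, rfl⟩
  -- the two sides of the putative cut, at the level of `V`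
  set A₀ : Set V := (fun x : ((↑s : Set {x : V // x ≠ b ∧ x ≠ c})ᶜ : Set _) => x.1.1) '' A
    with hA₀def
  set B₀ : Set V := (fun x : ((↑s : Set {x : V // x ≠ b ∧ x ≠ c})ᶜ : Set _) => x.1.1) '' Aᶜ
    with hB₀def
  have hmemS : ∀ (C : Set ((↑s : Set {x : V // x ≠ b ∧ x ≠ c})ᶜ : Set _)),
      ∀ u ∈ ((fun x : ((↑s : Set {x : V // x ≠ b ∧ x ≠ c})ᶜ : Set _) => x.1.1) '' C),
      u ≠ b ∧ u ≠ c ∧ u ∉ Sf := by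
    rintro C u ⟨x, hx, rfl⟩
    refine ⟨x.1.2.1, x.1.2.2, fun hmem => ?_⟩
    rw [hSfmem] at hmem
    obtain ⟨hv, hmem⟩ := hmem
    have hx1 : (⟨x.1.1, hv⟩ : {x : V // x ≠ b ∧ x ≠ c}) = x.1 := Subtype.ext rfl
    exact x.2 (by rw [hx1] at hmem; simpa using hmem)
  have hmemA₀ : ∀ u ∈ A₀, u ≠ b ∧ u ≠ c ∧ u ∉ Sf := hmemS A
  have hmemB₀ : ∀ u ∈ B₀, u ≠ b ∧ u ≠ c ∧ u ∉ Sf := hmemS Aᶜ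
  have hcov : ∀ v, v ≠ b → v ≠ c → v ∉ Sf → v ∈ A₀ ∨ v ∈ B₀ := by
    intro v hvb hvc hvSf
    have hvs : (⟨v, hvb, hvc⟩ : {x : V // x ≠ b ∧ x ≠ c}) ∈
        ((↑s : Set {x : V // x ≠ b ∧ x ≠ c})ᶜ) := by
      intro h
      exact hvSf ((hSfmem v).mpr ⟨⟨hvb, hvc⟩, by simpa using h⟩)
    by_cases h : (⟨⟨v, hvb, hvc⟩, hvs⟩ : ((↑s : Set {x : V // x ≠ b ∧ x ≠ c})ᶜ : Set _)) ∈ A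
    · exact Or.inl ⟨_, h, rfl⟩
    · exact Or.inr ⟨_, h, rfl⟩
  have hdisj : ∀ u, u ∈ A₀ → u ∈ B₀ → False := by
    rintro u ⟨x, hx, rfl⟩ ⟨y, hy, hxy⟩
    have : y = x := Subtype.ext (Subtype.ext hxy)
    exact hy (this ▸ hx)
  have raw_ne : ∀ u v : V, RawAdj G a a' b' c' u v → u ≠ v := by
    rintro u v hr rfl
    rcases hr with ⟨-, -, h⟩ | ⟨rfl, h⟩ | ⟨rfl, h⟩
    · exact h.ne rfl
    · rcases h with h | h | h
      exacts [ha'a h.symm, hb'a h.symm, hc'a h.symm]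
    · rcases h with h | h | h
      exacts [ha'a h.symm, hb'a h.symm, hc'a h.symm]
  have raw_symm : ∀ u v : V, RawAdj G a a' b' c' u v → RawAdj G a a' b' c' v u := by
    rintro u v (⟨h1, h2, h3⟩ | h | h)
    exacts [Or.inl ⟨h2, h1, h3.symm⟩, Or.inr (Or.inr h), Or.inr (Or.inl h)]
  have hno : ∀ u ∈ A₀, ∀ v ∈ B₀, ¬ RawAdj G a a' b' c' u v := by
    rintro u ⟨x, hx, rfl⟩ v ⟨y, hy, rfl⟩ hraw
    have hne : x.1.1 ≠ y.1.1 := raw_ne _ _ hraw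
    refine hcon x hx y hy ?_
    show (deltaY G a b c a' b' c').Adj x.1 y.1
    exact ⟨fun h => hne (congrArg Subtype.val h), hraw⟩
  have hno' : ∀ u ∈ B₀, ∀ v ∈ A₀, ¬ RawAdj G a a' b' c' u v :=
    fun u hu v hv h => hno v hv u hu (raw_symm _ _ h)
  have hA₀ne : A₀.Nonempty := hAne.image _
  have hB₀ne : B₀.Nonempty := hAcne.image _
  -- Key lemma for the case `a ∉ Sf`
  have key1 : ∀ X Y : Set V,
      (∀ u ∈ X, u ≠ b ∧ u ≠ c ∧ u ∉ Sf) →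
      (∀ u ∈ Y, u ≠ b ∧ u ≠ c ∧ u ∉ Sf) →
      (∀ v, v ≠ b → v ≠ c → v ∉ Sf → v ∈ X ∨ v ∈ Y) →
      (∀ u, u ∈ X → u ∈ Y → False) →
      (∀ u ∈ X, ∀ v ∈ Y, ¬ RawAdj G a a' b' c' u v) →
      Y.Nonempty → a ∈ X → False := by
    intro X Y hmX hmY hcv hdj hnc hYne haX
    obtain ⟨v₀, hv₀⟩ := hYne
    obtain ⟨u, v, huT, hvT, huA, hvA, hadj⟩ := aux_cross3 h3vc Sf hSfcard (X ∪ {b, c})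
      ⟨a, (hmX a haX).2.2, Or.inl haX⟩
      ⟨v₀, (hmY v₀ hv₀).2.2, by
        simp only [Set.mem_union, Set.mem_insert_iff, Set.mem_singleton_iff, not_or]
        exact ⟨fun h => hdj v₀ h hv₀, (hmY v₀ hv₀).1, (hmY v₀ hv₀).2.1⟩⟩
    have hv1 : v ∉ X ∧ v ≠ b ∧ v ≠ c := by
      simpa only [Set.mem_union, Set.mem_insert_iff, Set.mem_singleton_iff, not_or] using hvA
    have hvY : v ∈ Y := (hcv v hv1.2.1 hv1.2.2 hvT).resolve_left hv1.1
    have hva : v ≠ a := fun h => hdj a haX (h ▸ hvY)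
    rcases (show u ∈ X ∨ u = b ∨ u = c by
        simpa only [Set.mem_union, Set.mem_insert_iff, Set.mem_singleton_iff] using huA) with
      huX | rfl | rfl
    · by_cases hua : u = a
      · subst hua
        rcases (hNa v).mp hadj with rfl | rfl | rfl
        · exact (hmY v hvY).1 rfl
        · exact (hmY v hvY).2.1 rfl
        · exact hnc u haX v hvY (Or.inr (Or.inl ⟨rfl, Or.inl rfl⟩))
      · exact hnc u huX v hvY (Or.inl ⟨hua, hva, hadj⟩)
    · rcases (hNb v).mp hadj with rfl | rfl | rfl
      · exact hva rfl
      · exact (hmY v hvY).2.1 rfl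
      · exact hnc a haX v hvY (Or.inr (Or.inl ⟨rfl, Or.inr (Or.inl rfl)⟩))
    · rcases (hNc v).mp hadj with rfl | rfl | rfl
      · exact hva rfl
      · exact (hmY v hvY).1 rfl
      · exact hnc a haX v hvY (Or.inr (Or.inl ⟨rfl, Or.inr (Or.inr rfl)⟩))
  -- Key lemma for the case `a ∈ Sf`, all outside neighbors avoiding one side
  have key2a : ∀ X Y : Set V,
      (∀ u ∈ X, u ≠ b ∧ u ≠ c ∧ u ∉ Sf) →
      (∀ u ∈ Y, u ≠ b ∧ u ≠ c ∧ u ∉ Sf) →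
      (∀ v, v ≠ b → v ≠ c → v ∉ Sf → v ∈ X ∨ v ∈ Y) →
      (∀ u, u ∈ X → u ∈ Y → False) →
      (∀ u ∈ X, ∀ v ∈ Y, ¬ RawAdj G a a' b' c' u v) →
      Y.Nonempty → a ∈ Sf → a' ∉ Y → b' ∉ Y → c' ∉ Y → False := by
    intro X Y hmX hmY hcv hdj hnc hYne haSf hna' hnb' hnc'
    obtain ⟨v₀, hv₀⟩ := hYne
    have hTcard : (Sf.erase a).card < 3 :=
      lt_trans (Finset.card_erase_lt_of_mem haSf) hSfcard
    obtain ⟨u, v, huT, hvT, huA, hvA, hadj⟩ := aux_cross3 h3vc (Sf.erase a) hTcard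
      (X ∪ {a, b, c})
      ⟨a, Finset.notMem_erase a Sf, Or.inr (Or.inl rfl)⟩
      ⟨v₀, fun h => (hmY v₀ hv₀).2.2 (Finset.mem_of_mem_erase h), by
        simp only [Set.mem_union, Set.mem_insert_iff, Set.mem_singleton_iff, not_or]
        exact ⟨fun h => hdj v₀ h hv₀, fun h => (hmY v₀ hv₀).2.2 (h ▸ haSf),
          (hmY v₀ hv₀).1, (hmY v₀ hv₀).2.1⟩⟩
    have hv1 : v ∉ X ∧ v ≠ a ∧ v ≠ b ∧ v ≠ c := by
      simpa only [Set.mem_union, Set.mem_insert_iff, Set.mem_singleton_iff, not_or] using hvA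
    have hvSf : v ∉ Sf := fun h => hvT (Finset.mem_erase.mpr ⟨hv1.2.1, h⟩)
    have hvY : v ∈ Y := (hcv v hv1.2.2.1 hv1.2.2.2 hvSf).resolve_left hv1.1
    rcases (show u ∈ X ∨ u = a ∨ u = b ∨ u = c by
        simpa only [Set.mem_union, Set.mem_insert_iff, Set.mem_singleton_iff] using huA) with
      huX | rfl | rfl | rfl
    · have hua : u ≠ a := fun h => (hmX u huX).2.2 (h ▸ haSf)
      exact hnc u huX v hvY (Or.inl ⟨hua, hv1.2.1, hadj⟩)
    · rcases (hNa v).mp hadj with rfl | rfl | rfl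
      exacts [absurd rfl hv1.2.2.1, absurd rfl hv1.2.2.2, hna' hvY]
    · rcases (hNb v).mp hadj with rfl | rfl | rfl
      exacts [absurd rfl hv1.2.1, absurd rfl hv1.2.2.2, hnb' hvY]
    · rcases (hNc v).mp hadj with rfl | rfl | rfl
      exacts [absurd rfl hv1.2.1, absurd rfl hv1.2.2.1, hnc' hvY]
  -- Key lemma for the case `a ∈ Sf`, exactly one outside neighbor on one side
  have key2c : ∀ X Y : Set V,
      (∀ u ∈ X, u ≠ b ∧ u ≠ c ∧ u ∉ Sf) →
      (∀ u ∈ Y, u ≠ b ∧ u ≠ c ∧ u ∉ Sf) →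
      (∀ v, v ≠ b → v ≠ c → v ∉ Sf → v ∈ X ∨ v ∈ Y) →
      (∀ u, u ∈ X → u ∈ Y → False) →
      (∀ u ∈ X, ∀ v ∈ Y, ¬ RawAdj G a a' b' c' u v) →
      a ∈ Sf → ∀ p, (p = a' ∨ p = b' ∨ p = c') → p ∈ Y →
      (∀ q, (q = a' ∨ q = b' ∨ q = c') → q ≠ p → q ∉ Y) → False := by
    intro X Y hmX hmY hcv hdj hnc haSf p hp hpY hq
    have hpa : p ≠ a := by rcases hp with rfl | rfl | rfl <;> assumption
    by_cases hY2 : ∃ v ∈ Y, v ≠ p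
    · obtain ⟨v₀, hv₀Y, hv₀p⟩ := hY2
      have hTcard : (insert p (Sf.erase a)).card < 3 := by
        have h1 := Finset.card_insert_le p (Sf.erase a)
        have h2 := Finset.card_erase_of_mem haSf
        omega
      have haT : a ∉ insert p (Sf.erase a) := by
        intro h
        rcases Finset.mem_insert.mp h with h | h
        exacts [hpa h.symm, Finset.notMem_erase a Sf h]
      obtain ⟨u, v, huT, hvT, huA, hvA, hadj⟩ := aux_cross3 h3vc (insert p (Sf.erase a))
        hTcard (X ∪ {a, b, c})
        ⟨a, haT, Or.inr (Or.inl rfl)⟩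
        ⟨v₀, by
          intro h
          rcases Finset.mem_insert.mp h with h | h
          exacts [hv₀p h, (hmY v₀ hv₀Y).2.2 (Finset.mem_of_mem_erase h)], by
          simp only [Set.mem_union, Set.mem_insert_iff, Set.mem_singleton_iff, not_or]
          exact ⟨fun h => hdj v₀ h hv₀Y,
            fun h => (hmY v₀ hv₀Y).2.2 (h ▸ haSf), (hmY v₀ hv₀Y).1, (hmY v₀ hv₀Y).2.1⟩⟩
      have hv1 : v ∉ X ∧ v ≠ a ∧ v ≠ b ∧ v ≠ c := by
        simpa only [Set.mem_union, Set.mem_insert_iff, Set.mem_singleton_iff, not_or] using hvA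
      have hvp : v ≠ p := fun h => hvT (by rw [h]; exact Finset.mem_insert_self p _)
      have hvSf : v ∉ Sf :=
        fun h => hvT (Finset.mem_insert.mpr (Or.inr (Finset.mem_erase.mpr ⟨hv1.2.1, h⟩)))
      have hvY : v ∈ Y := (hcv v hv1.2.2.1 hv1.2.2.2 hvSf).resolve_left hv1.1
      rcases (show u ∈ X ∨ u = a ∨ u = b ∨ u = c by
          simpa only [Set.mem_union, Set.mem_insert_iff, Set.mem_singleton_iff] using huA) with
        huX | rfl | rfl | rfl
      · have hua : u ≠ a := fun h => (hmX u huX).2.2 (h ▸ haSf)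
        exact hnc u huX v hvY (Or.inl ⟨hua, hv1.2.1, hadj⟩)
      · rcases (hNa v).mp hadj with rfl | rfl | rfl
        exacts [absurd rfl hv1.2.2.1, absurd rfl hv1.2.2.2, hq v (Or.inl rfl) hvp hvY]
      · rcases (hNb v).mp hadj with rfl | rfl | rfl
        exacts [absurd rfl hv1.2.1, absurd rfl hv1.2.2.2, hq v (Or.inr (Or.inl rfl)) hvp hvY]
      · rcases (hNc v).mp hadj with rfl | rfl | rfl
        exacts [absurd rfl hv1.2.1, absurd rfl hv1.2.2.1, hq v (Or.inr (Or.inr rfl)) hvp hvY]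
    · push_neg at hY2
      obtain ⟨d, e, hde, hd, he⟩ := hprime2 p hp
      obtain ⟨hdadj, hda, hdb, hdc⟩ := hmemM p d hd
      obtain ⟨headj, hea, heb, hec⟩ := hmemM p e he
      have hdin : ∀ w, G.Adj p w → w ≠ a → w ≠ b → w ≠ c → w ∈ Sf := by
        intro w hw hwa hwb hwc
        by_contra hwSf
        rcases hcv w hwb hwc hwSf with hwX | hwY
        · exact hnc w hwX p hpY (Or.inl ⟨hwa, hpa, hw.symm⟩)
        · exact hw.ne (hY2 w hwY).symm
      have hdS := hdin d hdadj hda hdb hdc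
      have heS := hdin e headj hea heb hec
      have hcard1 : (Sf.erase a).card ≤ 1 := by
        have := Finset.card_erase_of_mem haSf
        omega
      exact hde (Finset.card_le_one.mp hcard1 d
        (Finset.mem_erase.mpr ⟨hda, hdS⟩) e (Finset.mem_erase.mpr ⟨hea, heS⟩))
  -- symmetric versions of the basic data
  have hcov' : ∀ v, v ≠ b → v ≠ c → v ∉ Sf → v ∈ B₀ ∨ v ∈ A₀ :=
    fun v h1 h2 h3 => (hcov v h1 h2 h3).symm
  have hdisj' : ∀ u, u ∈ B₀ → u ∈ A₀ → False := fun u hu hv => hdisj u hv hu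
  -- the case analysis
  by_cases haSf : a ∈ Sf
  · by_cases h1 : a' ∈ B₀ <;> by_cases h2 : b' ∈ B₀ <;> by_cases h3 : c' ∈ B₀
    · exact key2a B₀ A₀ hmemB₀ hmemA₀ hcov' hdisj' hno' hA₀ne haSf
        (fun h => hdisj a' h h1) (fun h => hdisj b' h h2) (fun h => hdisj c' h h3)
    · by_cases h3' : c' ∈ Sf
      · exact key2a B₀ A₀ hmemB₀ hmemA₀ hcov' hdisj' hno' hA₀ne haSf
          (fun h => hdisj a' h h1) (fun h => hdisj b' h h2)
          (fun h => (hmemA₀ c' h).2.2 h3')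
      · have hc'A : c' ∈ A₀ := (hcov c' hc'b hc'c h3').resolve_right h3
        refine key2c B₀ A₀ hmemB₀ hmemA₀ hcov' hdisj' hno' haSf c' (Or.inr (Or.inr rfl)) hc'A ?_
        rintro q (rfl | rfl | rfl) hqp
        exacts [fun h => hdisj q h h1, fun h => hdisj q h h2, absurd rfl hqp]
    · by_cases h2' : b' ∈ Sf
      · exact key2a B₀ A₀ hmemB₀ hmemA₀ hcov' hdisj' hno' hA₀ne haSf
          (fun h => hdisj a' h h1) (fun h => (hmemA₀ b' h).2.2 h2')
          (fun h => hdisj c' h h3)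
      · have hb'A : b' ∈ A₀ := (hcov b' hb'b hb'c h2').resolve_right h2
        refine key2c B₀ A₀ hmemB₀ hmemA₀ hcov' hdisj' hno' haSf b' (Or.inr (Or.inl rfl)) hb'A ?_
        rintro q (rfl | rfl | rfl) hqp
        exacts [fun h => hdisj q h h1, absurd rfl hqp, fun h => hdisj q h h3]
    · refine key2c A₀ B₀ hmemA₀ hmemB₀ hcov hdisj hno haSf a' (Or.inl rfl) h1 ?_
      rintro q (rfl | rfl | rfl) hqp
      exacts [absurd rfl hqp, h2, h3]
    · by_cases h1' : a' ∈ Sf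
      · exact key2a B₀ A₀ hmemB₀ hmemA₀ hcov' hdisj' hno' hA₀ne haSf
          (fun h => (hmemA₀ a' h).2.2 h1') (fun h => hdisj b' h h2)
          (fun h => hdisj c' h h3)
      · have ha'A : a' ∈ A₀ := (hcov a' ha'b ha'c h1').resolve_right h1
        refine key2c B₀ A₀ hmemB₀ hmemA₀ hcov' hdisj' hno' haSf a' (Or.inl rfl) ha'A ?_
        rintro q (rfl | rfl | rfl) hqp
        exacts [absurd rfl hqp, fun h => hdisj q h h2, fun h => hdisj q h h3]
    · refine key2c A₀ B₀ hmemA₀ hmemB₀ hcov hdisj hno haSf b' (Or.inr (Or.inl rfl)) h2 ?_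
      rintro q (rfl | rfl | rfl) hqp
      exacts [h1, absurd rfl hqp, h3]
    · refine key2c A₀ B₀ hmemA₀ hmemB₀ hcov hdisj hno haSf c' (Or.inr (Or.inr rfl)) h3 ?_
      rintro q (rfl | rfl | rfl) hqp
      exacts [h1, h2, absurd rfl hqp]
    · exact key2a A₀ B₀ hmemA₀ hmemB₀ hcov hdisj hno hB₀ne haSf h1 h2 h3
  · rcases hcov a hab.ne hac.ne haSf with haX | haX
    · exact key1 A₀ B₀ hmemA₀ hmemB₀ hcov hdisj hno hB₀ne haX
    · exact key1 B₀ A₀ hmemB₀ hmemA₀ hcov' hdisj' hno' hA₀ne haX
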